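/- For every p ∈ ℚ∞ with c(p) > 2, at least one of the three values c(μ_L(p)), c(μ_D(p)), c(μ_U(p)) is strictly smaller than c(p). -/

import Mathlib

open Matrix

abbrev V6 := Fin 6 → ℤ

def C6 : Matrix (Fin 6) (Fin 6) ℤ :=
  !![1,0,-1,-1,1,1;
     0,1,-1,-1,1,1;
     0,0,1,0,-1,-1;
     0,0,0,1,-1,-1;
     0,0,0,0,1,0;
     0,0,0,0,0,1]

/-- The bilinear form `⟨x,y⟩ = xᵀ C y` on `ℤ^6`. -/
def form (x y : V6) : ℤ := x ⬝ᵥ C6.mulVec y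

/-- The quaternion `i`. -/
def qI : Quaternion ℤ := ⟨0,1,0,0⟩
/-- The quaternion `j`. -/
def qJ : Quaternion ℤ := ⟨0,0,1,0⟩
/-- The quaternion `k`. -/
def qK : Quaternion ℤ := ⟨0,0,0,1⟩

instance : DecidableEq (Quaternion ℤ) := fun x y =>
  decidable_of_iff (x.re = y.re ∧ x.imI = y.imI ∧ x.imJ = y.imJ ∧ x.imK = y.imK)
    ⟨fun ⟨h1, h2, h3, h4⟩ => QuaternionAlgebra.ext h1 h2 h3 h4,
     fun h => by subst h; exact ⟨rfl, rfl, rfl, rfl⟩⟩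

/-- The quaternion group `H = {±1, ±i, ±j, ±k}`. -/
def Hset : Finset (Quaternion ℤ) := {1, -1, qI, -qI, qJ, -qJ, qK, -qK}

/-- The subset `H⁺ = {1, i, j, k}`. -/
def Hplus : Finset (Quaternion ℤ) := {1, qI, qJ, qK}

/-- Index type for the three special slopes `0`, `1`, `∞`. -/
inductive Ty | zero | one | inf
deriving DecidableEq

def h0 : V6 := ![0,0,1,1,1,1]
def h1 : V6 := ![1,1,2,2,1,1]
def hinf : V6 := ![1,1,1,1,0,0]

def hTy : Ty → V6
  | .zero => h0
  | .one => h1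
  | .inf => hinf

/-- The vectors `v_t^x` for `t ∈ {0,1,∞}` and `x ∈ H⁺`. -/
def vposTy : Ty → Quaternion ℤ → V6
  | .zero, x => if x = 1 then ![0,0,1,0,1,0] else if x = qI then ![-1,0,0,0,0,0]
      else if x = qJ then ![0,0,1,0,0,1] else ![0,1,1,1,1,1]
  | .one, x => if x = 1 then ![1,0,1,1,1,0] else if x = qI then ![0,1,1,1,1,0]
      else if x = qJ then ![0,0,1,0,0,0] else ![1,1,2,1,1,1]
  | .inf, x => if x = 1 then ![1,0,0,1,0,0] else if x = qI then ![1,1,1,1,1,0]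
      else if x = qJ then ![0,0,0,0,0,-1] else ![1,0,1,0,0,0]

/-- The vectors `v_t^x` for `t ∈ {0,1,∞}` and `x ∈ H`, with `v_t^{-x} = h_t - v_t^x`. -/
def vTy (t : Ty) (x : Quaternion ℤ) : V6 :=
  if x ∈ Hplus then vposTy t x else hTy t - vposTy t (-x)

/-- `a(q)`: numerator, with `a(∞) = 1`. -/
def aQ : WithTop ℚ → ℤ := WithTop.recTopCoe 1 Rat.num

/-- `b(q)`: denominator, with `b(∞) = 0`. -/
def bQ : WithTop ℚ → ℤ := WithTop.recTopCoe 0 (fun x => (x.den : ℤ))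

/-- The type `t(q) ∈ {0,1,∞}` of a slope `q`. -/
def tyQ (q : WithTop ℚ) : Ty :=
  if aQ q % 2 = 0 then Ty.zero else if bQ q % 2 = 1 then Ty.one else Ty.inf

/-- `⌊n⌋₂ = n/2` for even `n` and `(n-1)/2` for odd `n`. -/
def half2 (n : ℤ) : ℤ := if Even n then n / 2 else (n - 1) / 2

/-- `h_q = b(q)·h₀ + a(q)·h_∞`. -/
def hQ (q : WithTop ℚ) : V6 := bQ q • h0 + aQ q • hinf

/-- `v_q^x = v_{t(q)}^x + ⌊b(q)⌋₂·h₀ + ⌊a(q)⌋₂·h_∞`. -/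
def vQ (q : WithTop ℚ) (x : Quaternion ℤ) : V6 :=
  vTy (tyQ q) x + half2 (bQ q) • h0 + half2 (aQ q) • hinf

/-- `rk e = ⟨e, h_∞⟩`. -/
def rk (e : V6) : ℤ := form e hinf

/-- `deg e = ⟨h₀, e⟩`. -/
def degV (e : V6) : ℤ := form h0 e

/-- `e` is positive if `rk e > 0`, or `rk e = 0` and `deg e > 0`. -/
def PosV (e : V6) : Prop := 0 < rk e ∨ (rk e = 0 ∧ 0 < degV e)

/-- `d(p,q) = |a(q)b(p) - a(p)b(q)|`. -/
def dQ (p q : WithTop ℚ) : ℤ := |aQ q * bQ p - aQ p * bQ q|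

/-- Complexity `c(p) = |a(p)| + |b(p)| + |a(p)+b(p)|`. -/
def cpx (p : WithTop ℚ) : ℤ := |aQ p| + |bQ p| + |aQ p + bQ p|


/-- The element of `ℚ∞` given by the normalization of an integer pair `(a,b)` with `b ≥ 0`
after negating both entries if `b < 0`; the pair `(±1, 0)` normalizes to `∞`. -/
def mkQ (a b : ℤ) : WithTop ℚ :=
  if b = 0 then ⊤ else (((a : ℚ) / (b : ℚ) : ℚ) : WithTop ℚ)

/-- The unfolding map `μ_L(p) = -p`, given in coprime coordinates by `(-a(p), b(p))`. -/
def muL (p : WithTop ℚ) : WithTop ℚ := mkQ (-aQ p) (bQ p)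

/-- The unfolding map `μ_D(p) = -p/(2p+1)`, given by `(-a(p), 2a(p)+b(p))`. -/
def muDq (p : WithTop ℚ) : WithTop ℚ := mkQ (-aQ p) (2 * aQ p + bQ p)

/-- The unfolding map `μ_U(p) = -2-p`, given by `(-a(p)-2b(p), b(p))`. -/
def muU (p : WithTop ℚ) : WithTop ℚ := mkQ (-aQ p - 2 * bQ p) (bQ p)

lemma aQ_coe' (q : ℚ) : aQ (q : WithTop ℚ) = q.num := rfl
lemma bQ_coe' (q : ℚ) : bQ (q : WithTop ℚ) = (q.den : ℤ) := rfl
lemma cpx_top' : cpx (⊤ : WithTop ℚ) = 2 := rfl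

lemma cpx_mkQ' (a b : ℤ) (hcop : Nat.Coprime a.natAbs b.natAbs) (hb : b ≠ 0) :
    cpx (mkQ a b) = |a| + |b| + |a + b| := by
  rcases lt_or_gt_of_ne hb with hneg | hpos
  · have hb' : (0:ℤ) < -b := by omega
    have hcop' : Nat.Coprime (-a).natAbs (-b).natAbs := by
      simpa [Int.natAbs_neg] using hcop
    have hdiv : ((a:ℚ)/(b:ℚ)) = ((-a:ℤ):ℚ)/((-b:ℤ):ℚ) := by
      push_cast; rw [neg_div_neg_eq]
    rw [mkQ, if_neg hb, hdiv, cpx, aQ_coe', bQ_coe',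
      Rat.num_div_eq_of_coprime hb' hcop', Rat.den_div_eq_of_coprime hb' hcop']
    have e : -a + -b = -(a+b) := by ring
    simp only [e, abs_neg]
  · rw [mkQ, if_neg hb, cpx, aQ_coe', bQ_coe',
      Rat.num_div_eq_of_coprime hpos hcop, Rat.den_div_eq_of_coprime hpos hcop]

theorem stmt19 (p : WithTop ℚ) (h : 2 < cpx p) :
    cpx (muL p) < cpx p ∨ cpx (muDq p) < cpx p ∨ cpx (muU p) < cpx p := by
  induction p using WithTop.recTopCoe with
  | top => rw [cpx_top'] at h; omega
  | coe q =>
    have hb : (0:ℤ) < (q.den:ℤ) := by exact_mod_cast q.pos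
    have hcop : Nat.Coprime q.num.natAbs (q.den:ℤ).natAbs := by
      simpa using q.reduced
    set a : ℤ := q.num with ha
    set b : ℤ := (q.den:ℤ) with hbdef
    have hcpx : cpx (q : WithTop ℚ) = |a| + |b| + |a+b| := rfl
    have hL : cpx (muL (q : WithTop ℚ)) = |(-a)| + |b| + |(-a)+b| := by
      rw [muL, aQ_coe', bQ_coe']
      exact cpx_mkQ' _ _ (by simpa [Int.natAbs_neg, ha, hbdef] using hcop) hb.ne'
    have hU : cpx (muU (q : WithTop ℚ)) = |(-a - 2*b)| + |b| + |(-a - 2*b)+b| := by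
      rw [muU, aQ_coe', bQ_coe']
      refine cpx_mkQ' _ _ ?_ hb.ne'
      have hic : IsCoprime a b := Int.isCoprime_iff_gcd_eq_one.mpr (by simpa [Int.gcd] using hcop)
      have h2 : IsCoprime (-a - 2*b) b := by
        have h3 := (hic.neg_left).add_mul_right_left (-2)
        rwa [show (-a + -2 * b : ℤ) = -a - 2*b by ring] at h3
      simpa [Int.gcd, ha, hbdef] using Int.isCoprime_iff_gcd_eq_one.mp h2
    have hkey : b = 1 ∨ (a ≠ 0 ∧ a.natAbs ≠ b.natAbs) := by
      by_cases e : a.natAbs = b.natAbs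
      · left
        rw [e] at hcop
        have := (Nat.coprime_self _).mp hcop
        omega
      · by_cases e0 : a = 0
        · left
          rw [e0] at hcop
          simp [Nat.coprime_zero_left] at hcop
          omega
        · right; exact ⟨e0, e⟩
    by_cases hD0 : 2*a + b = 0
    · right; left
      have hDt : muDq (q : WithTop ℚ) = ⊤ := by
        rw [muDq, aQ_coe', bQ_coe', ← ha, ← hbdef, hD0, mkQ, if_pos rfl]
      rw [hDt, cpx_top']
      exact h
    · have hD : cpx (muDq (q : WithTop ℚ)) = |(-a)| + |2*a+b| + |(-a)+(2*a+b)| := by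
        rw [muDq, aQ_coe', bQ_coe']
        refine cpx_mkQ' _ _ ?_ hD0
        have hic : IsCoprime a b := Int.isCoprime_iff_gcd_eq_one.mpr (by simpa [Int.gcd] using hcop)
        have h2 : IsCoprime (-a) (2*a + b) := by
          have h3 := (hic.neg_left).add_mul_left_right (-2)
          rwa [show b + -a * (-2) = 2*a + b by ring] at h3
        simpa [Int.gcd] using Int.isCoprime_iff_gcd_eq_one.mp h2
      rw [hcpx] at h ⊢
      rw [hL, hD, hU]
      simp only [Int.abs_eq_natAbs] at h ⊢
      rcases hkey with h1 | ⟨h2, h3⟩ <;> omega
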